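/- For the linear consensus ODE du/dt = Qu with Q = M⁻¹A - I for a connected graph with all degrees ≥ 1, every solution converges as t → ∞ to the constant vector ω_∞·1 with ω_∞ = (∑ᵢ deg(i) uᵢ(0))/(∑ⱼ deg(j)). -/

import Mathlib

open Finset Filter

section AuxConsensus

set_option linter.unusedSectionVars false

variable {N : ℕ} (G : SimpleGraph (Fin N)) [DecidableRel G.Adj]

lemma aux_sum_adj (i : Fin N) (c : Fin N → ℝ) :
    ∑ j, (if G.Adj i j then c j else 0) = ∑ j ∈ G.neighborFinset i, c j := by
  rw [SimpleGraph.neighborFinset_eq_filter, Finset.sum_filter]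

lemma aux_sum_adj_const (i : Fin N) (c : ℝ) :
    ∑ j, (if G.Adj i j then c else 0) = (G.degree i : ℝ) * c := by
  rw [aux_sum_adj, Finset.sum_const, SimpleGraph.card_neighborFinset_eq_degree, nsmul_eq_mul]

lemma aux_walk_const (v : Fin N → ℝ) (h : ∀ i j, G.Adj i j → v i = v j)
    {i j : Fin N} (w : G.Walk i j) : v i = v j := by
  induction w with
  | nil => rfl
  | cons ha _ ih => exact (h _ _ ha).trans ih

-- f scaling and expansions
lemma aux_f_smul (v : Fin N → ℝ) (c : ℝ) :
    ∑ i, ∑ j, (if G.Adj i j then (c * v i - c * v j)^2 else 0)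
      = c^2 * ∑ i, ∑ j, (if G.Adj i j then (v i - v j)^2 else 0) := by
  rw [Finset.mul_sum]
  refine Finset.sum_congr rfl fun i _ => ?_
  rw [Finset.mul_sum]
  refine Finset.sum_congr rfl fun j _ => ?_
  split <;> ring

lemma aux_g_pos (hdeg : ∀ i, 1 ≤ G.degree i) (v : Fin N → ℝ) {k : Fin N} :
    v k ^ 2 ≤ ∑ i, (G.degree i : ℝ) * v i ^ 2 := by
  have h1 : (1:ℝ) * v k ^ 2 ≤ (G.degree k : ℝ) * v k ^ 2 := by
    apply mul_le_mul_of_nonneg_right _ (sq_nonneg _)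
    exact_mod_cast hdeg k
  refine le_trans (by linarith) (Finset.single_le_sum (fun i _ => ?_) (mem_univ k))
  positivity

lemma aux_gap' {N : ℕ} (hN : 1 ≤ N) (G : SimpleGraph (Fin N)) [DecidableRel G.Adj]
    (hconn : G.Connected) (hdeg : ∀ i, 1 ≤ G.degree i) :
    ∃ γ > 0, ∀ v : Fin N → ℝ, (∑ k, (G.degree k : ℝ) * v k = 0) →
      γ * (∑ k, (G.degree k : ℝ) * v k ^ 2) ≤
        ∑ i, ∑ j, (if G.Adj i j then (v i - v j)^2 else 0) := by
  classical
  set d : Fin N → ℝ := fun i => (G.degree i : ℝ) with hd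
  have hd1 : ∀ i, (1:ℝ) ≤ d i := fun i => by simp only [hd]; exact_mod_cast hdeg i
  set g : (Fin N → ℝ) → ℝ := fun v => ∑ k, d k * v k ^ 2 with hg
  set f : (Fin N → ℝ) → ℝ := fun v => ∑ i, ∑ j, (if G.Adj i j then (v i - v j)^2 else 0) with hf
  have hfnn : ∀ v, 0 ≤ f v := fun v => by
    apply Finset.sum_nonneg; intro i _; apply Finset.sum_nonneg; intro j _
    split <;> positivity
  have hgnn : ∀ v, 0 ≤ g v := fun v => by
    apply Finset.sum_nonneg; intro k _
    have := hd1 k; positivity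
  -- f v = 0 under constraint implies v = 0
  have hker : ∀ v : Fin N → ℝ, (∑ k, d k * v k = 0) → f v = 0 → v = 0 := by
    intro v hc hf0
    have hadj : ∀ i j, G.Adj i j → v i = v j := by
      intro i j hij
      have h1 : ∀ i ∈ (univ : Finset (Fin N)), 0 ≤ ∑ j, (if G.Adj i j then (v i - v j)^2 else 0) := by
        intro i _; apply Finset.sum_nonneg; intro j _; split <;> positivity
      have h2 := (Finset.sum_eq_zero_iff_of_nonneg h1).mp hf0 i (mem_univ i)
      have h3 : ∀ j ∈ (univ : Finset (Fin N)), 0 ≤ (if G.Adj i j then (v i - v j)^2 else 0) := by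
        intro j _; split <;> positivity
      have h4 := (Finset.sum_eq_zero_iff_of_nonneg h3).mp h2 j (mem_univ j)
      rw [if_pos hij] at h4
      have := sq_eq_zero_iff.mp h4
      linarith
    have hconst : ∀ i j : Fin N, v i = v j := fun i j =>
      aux_walk_const G v hadj (hconn i j).some
    funext k
    have hval : ∀ i, v i = v k := fun i => hconst i k
    have : ∑ i, d i * v i = (∑ i, d i) * v k := by
      rw [Finset.sum_mul]; exact Finset.sum_congr rfl fun i _ => by rw [hval i]
    rw [this] at hc
    have hdpos : 0 < ∑ i, d i := by
      have : (0:ℝ) < 1 := one_pos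
      calc (0:ℝ) < 1 := one_pos
        _ ≤ d ⟨0, hN⟩ := hd1 _
        _ ≤ ∑ i, d i := Finset.single_le_sum (fun i _ => by linarith [hd1 i]) (mem_univ _)
    simpa using (mul_eq_zero.mp hc).resolve_left (ne_of_gt hdpos)
  -- compact set K
  set K : Set (Fin N → ℝ) := {v | (∑ k, d k * v k = 0) ∧ g v = 1} with hK
  have hccon : Continuous (fun v : Fin N → ℝ => ∑ k, d k * v k) :=
    continuous_finset_sum _ fun k _ => continuous_const.mul (continuous_apply k)
  have hgcon : Continuous g :=
    continuous_finset_sum _ fun k _ => continuous_const.mul ((continuous_apply k).pow 2)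
  have hKclosed : IsClosed K :=
    IsClosed.inter (isClosed_eq hccon continuous_const) (isClosed_eq hgcon continuous_const)
  have hKbdd : Bornology.IsBounded K := by
    rw [Metric.isBounded_iff_subset_closedBall 0]
    refine ⟨1, fun v hv => ?_⟩
    rw [Metric.mem_closedBall, dist_zero_right]
    rw [pi_norm_le_iff_of_nonneg zero_le_one]
    intro k
    have h1 : v k ^ 2 ≤ 1 := by
      calc v k ^ 2 ≤ ∑ i, (G.degree i : ℝ) * v i ^ 2 := aux_g_pos G hdeg v
        _ = g v := rfl
        _ = 1 := hv.2
    rw [Real.norm_eq_abs]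
    nlinarith [h1, sq_abs (v k), abs_nonneg (v k)]
  have hKcompact : IsCompact K := Metric.isCompact_of_isClosed_isBounded hKclosed hKbdd
  have hfcont : Continuous f := by
    apply continuous_finset_sum; intro i _
    apply continuous_finset_sum; intro j _
    split
    · exact ((continuous_apply i).sub (continuous_apply j)).pow 2
    · exact continuous_const
  by_cases hKne : K.Nonempty
  · obtain ⟨v0, hv0K, hv0min⟩ := hKcompact.exists_isMinOn hKne hfcont.continuousOn
    refine ⟨f v0, ?_, ?_⟩
    · rcases lt_or_eq_of_le (hfnn v0) with h | h
      · exact h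
      · exfalso
        have h0 := hker v0 hv0K.1 h.symm
        have h2 := hv0K.2
        rw [h0] at h2
        simp [hg] at h2
    · intro v hv
      by_cases hv0 : v = 0
      · simp [hv0, hg, hf]
      · have hv' : ∑ k, d k * v k = 0 := hv
        have hgv : 0 < g v := by
          rcases lt_or_eq_of_le (hgnn v) with h | h
          · exact h
          · exfalso; apply hv0
            funext k
            have h1 : ∀ k ∈ (univ : Finset (Fin N)), 0 ≤ d k * v k ^ 2 := by
              intro k _; have := hd1 k; positivity
            have h2 := (Finset.sum_eq_zero_iff_of_nonneg h1).mp h.symm k (mem_univ k)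
            have := hd1 k
            have : v k ^ 2 = 0 := by
              rcases mul_eq_zero.mp h2 with h | h
              · linarith
              · exact h
            simpa using sq_eq_zero_iff.mp this
        set c : ℝ := (Real.sqrt (g v))⁻¹ with hc
        have hsq : Real.sqrt (g v) > 0 := Real.sqrt_pos.mpr hgv
        have hcpos : 0 < c := inv_pos.mpr hsq
        have hc2 : c ^ 2 * g v = 1 := by
          rw [hc]
          rw [← Real.sq_sqrt (le_of_lt hgv)]
          field_simp
          rw [Real.sqrt_sq hsq.le]
        have hmemK : (fun k => c * v k) ∈ K := by
          constructor
          · have : ∑ k, d k * (c * v k) = c * ∑ k, d k * v k := by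
              rw [Finset.mul_sum]; exact Finset.sum_congr rfl fun k _ => by ring
            rw [this, hv']; ring
          · have : g (fun k => c * v k) = c ^ 2 * g v := by
              simp only [hg, Finset.mul_sum]
              exact Finset.sum_congr rfl fun k _ => by ring
            rw [this, hc2]
        have hle : f v0 ≤ f (fun k => c * v k) := hv0min hmemK
        have hfs : f (fun k => c * v k) = c ^ 2 * f v := aux_f_smul G v c
        rw [hfs] at hle
        have h2 : f v0 * g v ≤ c ^ 2 * f v * g v :=
          mul_le_mul_of_nonneg_right hle (hgnn v)
        show f v0 * g v ≤ f v
        calc f v0 * g v ≤ c ^ 2 * f v * g v := h2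
          _ = (c ^ 2 * g v) * f v := by ring
          _ = f v := by rw [hc2]; ring
  · refine ⟨1, one_pos, fun v hv => ?_⟩
    have hv' : ∑ k, d k * v k = 0 := hv
    have hv0 : v = 0 := by
      by_contra hne
      apply hKne
      -- same scaling as above to build element of K
      have hgv : 0 < g v := by
        rcases lt_or_eq_of_le (hgnn v) with h | h
        · exact h
        · exfalso; apply hne
          funext k
          have h1 : ∀ k ∈ (univ : Finset (Fin N)), 0 ≤ d k * v k ^ 2 := by
            intro k _; have := hd1 k; positivity
          have h2 := (Finset.sum_eq_zero_iff_of_nonneg h1).mp h.symm k (mem_univ k)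
          have := hd1 k
          have : v k ^ 2 = 0 := by
            rcases mul_eq_zero.mp h2 with h | h
            · linarith
            · exact h
          simpa using sq_eq_zero_iff.mp this
      set c : ℝ := (Real.sqrt (g v))⁻¹ with hc
      have hsq : Real.sqrt (g v) > 0 := Real.sqrt_pos.mpr hgv
      have hc2 : c ^ 2 * g v = 1 := by
        rw [hc, ← Real.sq_sqrt (le_of_lt hgv)]
        field_simp
        rw [Real.sqrt_sq hsq.le]
      refine ⟨fun k => c * v k, ?_, ?_⟩
      · have : ∑ k, d k * (c * v k) = c * ∑ k, d k * v k := by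
          rw [Finset.mul_sum]; exact Finset.sum_congr rfl fun k _ => by ring
        rw [this, hv']; ring
      · have : g (fun k => c * v k) = c ^ 2 * g v := by
          simp only [hg, Finset.mul_sum]
          exact Finset.sum_congr rfl fun k _ => by ring
        rw [this, hc2]
    simp [hv0, hg, hf]


lemma aux_Q_split (Q : Matrix (Fin N) (Fin N) ℝ)
    (hQ : ∀ i j, Q i j =
      if i = j then -1 else if G.Adj i j then ((G.degree i : ℝ))⁻¹ else 0) (i j : Fin N) :
    Q i j = (if i = j then (-1:ℝ) else 0) + (if G.Adj i j then ((G.degree i : ℝ))⁻¹ else 0) := by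
  rw [hQ]
  by_cases h : i = j
  · subst h; simp [G.irrefl]
  · simp [h]

lemma aux_rowsum (hdeg : ∀ i, 1 ≤ G.degree i) (Q : Matrix (Fin N) (Fin N) ℝ)
    (hQ : ∀ i j, Q i j =
      if i = j then -1 else if G.Adj i j then ((G.degree i : ℝ))⁻¹ else 0) (i : Fin N) :
    ∑ j, Q i j = 0 := by
  have hne : ((G.degree i : ℝ)) ≠ 0 := by
    have : (1:ℝ) ≤ (G.degree i : ℝ) := by exact_mod_cast hdeg i
    linarith
  calc ∑ j, Q i j
      = ∑ j, ((if i = j then (-1:ℝ) else 0) + (if G.Adj i j then ((G.degree i : ℝ))⁻¹ else 0)) :=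
        Finset.sum_congr rfl fun j _ => aux_Q_split G Q hQ i j
    _ = (∑ j, (if i = j then (-1:ℝ) else 0)) + ∑ j, (if G.Adj i j then ((G.degree i : ℝ))⁻¹ else 0) :=
        Finset.sum_add_distrib
    _ = -1 + (G.degree i : ℝ) * ((G.degree i : ℝ))⁻¹ := by
        rw [Finset.sum_ite_eq, if_pos (mem_univ i), aux_sum_adj_const]
    _ = 0 := by rw [mul_inv_cancel₀ hne]; ring

lemma aux_colsum (hdeg : ∀ i, 1 ≤ G.degree i) (Q : Matrix (Fin N) (Fin N) ℝ)
    (hQ : ∀ i j, Q i j =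
      if i = j then -1 else if G.Adj i j then ((G.degree i : ℝ))⁻¹ else 0) (j : Fin N) :
    ∑ i, (G.degree i : ℝ) * Q i j = 0 := by
  have step : ∀ i, (G.degree i : ℝ) * Q i j
      = (if i = j then -(G.degree j : ℝ) else 0) + (if G.Adj j i then (1:ℝ) else 0) := by
    intro i
    have hne : ((G.degree i : ℝ)) ≠ 0 := by
      have : (1:ℝ) ≤ (G.degree i : ℝ) := by exact_mod_cast hdeg i
      linarith
    have hiff : (if G.Adj j i then (1:ℝ) else 0) = (if G.Adj i j then (1:ℝ) else 0) :=
      if_congr (G.adj_comm j i) rfl rfl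
    rw [aux_Q_split G Q hQ i j, hiff]
    by_cases h : i = j
    · subst h; simp [G.irrefl]
    · by_cases h2 : G.Adj i j
      · simp [h, h2, mul_inv_cancel₀ hne]
      · simp [h, h2]
  calc ∑ i, (G.degree i : ℝ) * Q i j
      = (∑ i, (if i = j then -(G.degree j : ℝ) else 0)) + ∑ i, (if G.Adj j i then (1:ℝ) else 0) := by
        rw [← Finset.sum_add_distrib]; exact Finset.sum_congr rfl fun i _ => step i
    _ = -(G.degree j : ℝ) + (G.degree j : ℝ) * 1 := by
        rw [Finset.sum_ite_eq', if_pos (mem_univ j), aux_sum_adj_const]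
    _ = 0 := by ring

lemma aux_energy (hdeg : ∀ i, 1 ≤ G.degree i) (Q : Matrix (Fin N) (Fin N) ℝ)
    (hQ : ∀ i j, Q i j =
      if i = j then -1 else if G.Adj i j then ((G.degree i : ℝ))⁻¹ else 0) (v : Fin N → ℝ) :
    ∑ k, (G.degree k : ℝ) * (2 * v k * Q.mulVec v k)
      = -∑ i, ∑ j, (if G.Adj i j then (v i - v j)^2 else 0) := by
  set d : Fin N → ℝ := fun i => (G.degree i : ℝ) with hd
  have hdpos : ∀ k, (0:ℝ) < d k := fun k => by
    have : (1:ℝ) ≤ d k := by simp only [hd]; exact_mod_cast hdeg k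
    linarith
  set s : Fin N → ℝ := fun k => ∑ j, (if G.Adj k j then v j else 0) with hs
  have hmv : ∀ k, Q.mulVec v k = -v k + (d k)⁻¹ * s k := by
    intro k
    simp only [Matrix.mulVec, dotProduct]
    calc ∑ j, Q k j * v j
        = ∑ j, ((if k = j then -(v j) else 0) + (if G.Adj k j then (d k)⁻¹ * v j else 0)) := by
          refine Finset.sum_congr rfl fun j _ => ?_
          rw [aux_Q_split G Q hQ k j]
          split_ifs <;> ring
      _ = (∑ j, (if k = j then -(v j) else 0)) + ∑ j, (if G.Adj k j then (d k)⁻¹ * v j else 0) :=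
          Finset.sum_add_distrib
      _ = -v k + (d k)⁻¹ * s k := by
          rw [Finset.sum_ite_eq, if_pos (mem_univ k)]
          congr 1
          rw [hs, Finset.mul_sum]
          exact Finset.sum_congr rfl fun j _ => by split <;> ring
  have hLHS : ∑ k, d k * (2 * v k * Q.mulVec v k)
      = (∑ k, ∑ j, (if G.Adj k j then 2 * v k * v j else 0)) - 2 * ∑ k, d k * v k ^ 2 := by
    rw [Finset.mul_sum, ← Finset.sum_sub_distrib]
    refine Finset.sum_congr rfl fun k _ => ?_
    rw [hmv k]
    have h1 : ∑ j, (if G.Adj k j then 2 * v k * v j else 0) = 2 * v k * s k := by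
      rw [hs, Finset.mul_sum]
      exact Finset.sum_congr rfl fun j _ => by split <;> ring
    rw [h1]
    have hne := (hdpos k).ne'
    field_simp
    ring
  have e1 : ∀ i, ∑ j, (if G.Adj i j then (v i)^2 else 0) = d i * v i ^ 2 := fun i =>
    aux_sum_adj_const G i _
  have e2 : ∑ i, ∑ j, (if G.Adj i j then (v j)^2 else 0) = ∑ k, d k * v k ^ 2 := by
    rw [Finset.sum_comm]
    refine Finset.sum_congr rfl fun j _ => ?_
    calc ∑ i, (if G.Adj i j then v j ^ 2 else 0)
        = ∑ i, (if G.Adj j i then v j ^ 2 else 0) :=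
          Finset.sum_congr rfl fun i _ => if_congr (G.adj_comm i j) rfl rfl
      _ = d j * v j ^ 2 := aux_sum_adj_const G j _
  have hfv : ∑ i, ∑ j, (if G.Adj i j then (v i - v j)^2 else 0)
      = 2 * (∑ k, d k * v k ^ 2) - ∑ i, ∑ j, (if G.Adj i j then 2 * v i * v j else 0) := by
    have expand : ∑ i, ∑ j, (if G.Adj i j then (v i - v j)^2 else 0)
        = ∑ i, ((∑ j, (if G.Adj i j then (v i)^2 else 0))
            + (∑ j, (if G.Adj i j then (v j)^2 else 0))
            - ∑ j, (if G.Adj i j then 2 * v i * v j else 0)) := by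
      refine Finset.sum_congr rfl fun i _ => ?_
      rw [← Finset.sum_add_distrib, ← Finset.sum_sub_distrib]
      exact Finset.sum_congr rfl fun j _ => by split <;> ring
    rw [expand, Finset.sum_sub_distrib, Finset.sum_add_distrib]
    rw [Finset.sum_congr rfl fun i _ => e1 i, e2]
    ring
  rw [hLHS, hfv]
  ring


end AuxConsensus

theorem stmt9 (N : ℕ) (hN : 1 ≤ N) (G : SimpleGraph (Fin N)) [DecidableRel G.Adj]
    (hconn : G.Connected) (hdeg : ∀ i, 1 ≤ G.degree i)
    (Q : Matrix (Fin N) (Fin N) ℝ)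
    (hQ : ∀ i j, Q i j =
      if i = j then -1 else if G.Adj i j then ((G.degree i : ℝ))⁻¹ else 0)
    (u : ℝ → Fin N → ℝ)
    (hODE : ∀ t i, HasDerivAt (fun s => u s i) (Q.mulVec (u t) i) t) :
    ∀ i, Filter.Tendsto (fun t => u t i) Filter.atTop
      (nhds ((∑ k, (G.degree k : ℝ) * u 0 k) / (∑ k, (G.degree k : ℝ)))) := by
  classical
  set d : Fin N → ℝ := fun i => (G.degree i : ℝ) with hd
  have hd1 : ∀ i, (1:ℝ) ≤ d i := fun i => by simp only [hd]; exact_mod_cast hdeg i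
  set S : ℝ := ∑ k, d k with hS
  have hSpos : 0 < S := by
    calc (0:ℝ) < 1 := one_pos
      _ ≤ d ⟨0, hN⟩ := hd1 _
      _ ≤ S := Finset.single_le_sum (fun i _ => by linarith [hd1 i]) (mem_univ _)
  set ω : ℝ := (∑ k, d k * u 0 k) / S with hω
  -- conservation
  have hconsv : ∀ t, ∑ k, d k * u t k = ∑ k, d k * u 0 k := by
    have hderiv : ∀ t, HasDerivAt (fun s => ∑ k, d k * u s k) 0 t := by
      intro t
      have h1 : HasDerivAt (fun s => ∑ k, d k * u s k) (∑ k, d k * Q.mulVec (u t) k) t :=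
        HasDerivAt.fun_sum fun k _ => (hODE t k).const_mul (d k)
      have hz : ∑ k, d k * Q.mulVec (u t) k = 0 := by
        simp only [Matrix.mulVec, dotProduct, Finset.mul_sum]
        rw [Finset.sum_comm]
        refine Finset.sum_eq_zero fun j _ => ?_
        calc ∑ i, d i * (Q i j * u t j) = (∑ i, d i * Q i j) * u t j := by
              rw [Finset.sum_mul]; exact Finset.sum_congr rfl fun i _ => by ring
          _ = 0 := by rw [aux_colsum G hdeg Q hQ j, zero_mul]
      rwa [hz] at h1
    intro t
    exact is_const_of_deriv_eq_zero (fun x => (hderiv x).differentiableAt)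
      (fun x => (hderiv x).deriv) t 0
  -- Q kills constants
  have hQshift : ∀ t k, Q.mulVec (u t) k = Q.mulVec (fun j => u t j - ω) k := by
    intro t k
    simp only [Matrix.mulVec, dotProduct]
    have h1 : ∑ j, Q k j * (u t j - ω) = (∑ j, Q k j * u t j) - ω * ∑ j, Q k j := by
      rw [Finset.mul_sum, ← Finset.sum_sub_distrib]
      exact Finset.sum_congr rfl fun j _ => by ring
    rw [h1, aux_rowsum G hdeg Q hQ k, mul_zero, sub_zero]
  -- spectral gap
  obtain ⟨γ, hγpos, hgap⟩ := aux_gap' hN G hconn hdeg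
  -- energy function
  set E : ℝ → ℝ := fun t => ∑ k, d k * (u t k - ω)^2 with hE
  have hEnn : ∀ t, 0 ≤ E t := fun t =>
    Finset.sum_nonneg fun k _ => mul_nonneg (by linarith [hd1 k]) (sq_nonneg _)
  have hvsum : ∀ t, ∑ k, d k * (u t k - ω) = 0 := by
    intro t
    have h1 : ∑ k, d k * (u t k - ω) = (∑ k, d k * u t k) - ω * S := by
      rw [hS, Finset.mul_sum, ← Finset.sum_sub_distrib]
      exact Finset.sum_congr rfl fun k _ => by ring
    rw [h1, hconsv t, hω, div_mul_cancel₀ _ (ne_of_gt hSpos), sub_self]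
  have hEderiv : ∀ t, HasDerivAt E
      (-(∑ i, ∑ j, (if G.Adj i j then ((u t i - ω) - (u t j - ω))^2 else 0))) t := by
    intro t
    have h1 : HasDerivAt E
        (∑ k, d k * ((2:ℕ) * (u t k - ω)^(2-1) * Q.mulVec (u t) k)) t :=
      HasDerivAt.fun_sum fun k _ => (((hODE t k).sub_const ω).pow 2).const_mul (d k)
    have h2 : ∑ k, d k * ((2:ℕ) * (u t k - ω)^(2-1) * Q.mulVec (u t) k)
        = -(∑ i, ∑ j, (if G.Adj i j then ((u t i - ω) - (u t j - ω))^2 else 0)) := by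
      rw [← aux_energy G hdeg Q hQ (fun k => u t k - ω)]
      refine Finset.sum_congr rfl fun k _ => ?_
      rw [hQshift t k]
      push_cast
      ring
    rwa [h2] at h1
  have hEbd : ∀ t, -(∑ i, ∑ j, (if G.Adj i j then ((u t i - ω) - (u t j - ω))^2 else 0))
      ≤ -γ * E t := by
    intro t
    have := hgap (fun k => u t k - ω) (hvsum t)
    have hEe : E t = ∑ k, d k * (u t k - ω) ^ 2 := rfl
    linarith [this]
  -- Gronwall
  set F : ℝ → ℝ := fun t => E t * Real.exp (γ * t) with hF
  have hFderiv : ∀ t, HasDerivAt F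
      ((-(∑ i, ∑ j, (if G.Adj i j then ((u t i - ω) - (u t j - ω))^2 else 0))) * Real.exp (γ * t)
        + E t * (Real.exp (γ * t) * γ)) t := by
    intro t
    have he : HasDerivAt (fun s : ℝ => Real.exp (γ * s)) (Real.exp (γ * t) * γ) t := by
      simpa using ((hasDerivAt_id t).const_mul γ).exp
    exact (hEderiv t).mul he
  have hanti : Antitone F := by
    apply antitone_of_deriv_nonpos (fun x => (hFderiv x).differentiableAt)
    intro x
    rw [(hFderiv x).deriv]
    have h1 := hEbd x
    have h2 := Real.exp_pos (γ * x)
    nlinarith [hEnn x]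
  have hEbound : ∀ t : ℝ, 0 ≤ t → E t ≤ E 0 * Real.exp (-(γ * t)) := by
    intro t ht
    have h1 : F t ≤ F 0 := hanti ht
    have h2 : (0:ℝ) < Real.exp (γ * t) := Real.exp_pos _
    have h3 : F 0 = E 0 := by simp [hF]
    rw [Real.exp_neg, ← div_eq_mul_inv, le_div_iff₀ h2]
    calc E t * Real.exp (γ * t) = F t := rfl
      _ ≤ F 0 := h1
      _ = E 0 := h3
  have hexp : Tendsto (fun t : ℝ => E 0 * Real.exp (-(γ * t))) atTop (nhds 0) := by
    have h1 : Tendsto (fun t : ℝ => -(γ * t)) atTop atBot :=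
      tendsto_neg_atBot_iff.mpr (tendsto_id.const_mul_atTop hγpos)
    have h2 : Tendsto (fun t : ℝ => Real.exp (-(γ * t))) atTop (nhds 0) :=
      Real.tendsto_exp_atBot.comp h1
    have := h2.const_mul (E 0)
    simpa using this
  have hEtend : Tendsto E atTop (nhds 0) := by
    apply squeeze_zero' (Eventually.of_forall hEnn)
    · filter_upwards [eventually_ge_atTop (0:ℝ)] with t ht
      exact hEbound t ht
    · exact hexp
  intro i
  have hsq : Tendsto (fun t => (u t i - ω)^2) atTop (nhds 0) := by
    apply squeeze_zero' (Eventually.of_forall fun t => sq_nonneg _)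
    · exact Eventually.of_forall fun t => aux_g_pos G hdeg (fun k => u t k - ω)
    · exact hEtend
  have habs : Tendsto (fun t => |u t i - ω|) atTop (nhds 0) := by
    have h1 : Tendsto (fun t => Real.sqrt ((u t i - ω)^2)) atTop (nhds 0) := by
      have := (Real.continuous_sqrt.tendsto 0).comp hsq
      simpa [Function.comp_def] using this
    simpa [Real.sqrt_sq_eq_abs] using h1
  have hdiff : Tendsto (fun t => u t i - ω) atTop (nhds 0) :=
    (tendsto_zero_iff_abs_tendsto_zero _).mpr habs
  have := hdiff.add_const ω
  simp only [sub_add_cancel, zero_add] at this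
  exact this
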